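/- Let a = (a_{ij}^{αβ}) be a tensor satisfying the symmetries a_{ij}^{αβ} = a_{ji}^{βα} and a_{ij}^{αβ} = a_{αj}^{iβ}, and a_{ij}^{αβ} ξ_i^α ξ_j^β ≥ κ₁|ξ|² for all symmetric ξ, with κ₁ > 0. With μ = κ₁/4, define b_{ij}^{αβ} = a_{ij}^{αβ} + μ δ_{iα} δ_{jβ} − μ δ_{iβ} δ_{jα} − μ δ_{ij} δ_{αβ}. Then b_{ij}^{αβ} ξ_i^α ξ_j^β ≥ (κ₁/8) |ξ + ξᵀ|² for every d×d matrix ξ; in particular b is positive semidefinite as a quadratic form on matrices and vanishes on skew-symmetric matrices. -/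
import Mathlib

open Matrix

lemma stmt3_sum4_congr {d : ℕ} {f g : Fin d → Fin d → Fin d → Fin d → ℝ}
    (h : ∀ i j α β, f i j α β = g i j α β) :
    (∑ i, ∑ j, ∑ α, ∑ β, f i j α β) = ∑ i, ∑ j, ∑ α, ∑ β, g i j α β := by
  simp only [h]

lemma stmt3_swap13 {d : ℕ} (g : Fin d → Fin d → Fin d → Fin d → ℝ) :
    (∑ i, ∑ j, ∑ α, ∑ β, g i j α β) = ∑ i, ∑ j, ∑ α, ∑ β, g α j i β := by
  conv_lhs => enter [2, i]; rw [Finset.sum_comm]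
  rw [Finset.sum_comm]
  conv_lhs => enter [2, i]; rw [Finset.sum_comm]

lemma stmt3_swap24 {d : ℕ} (g : Fin d → Fin d → Fin d → Fin d → ℝ) :
    (∑ i, ∑ j, ∑ α, ∑ β, g i j α β) = ∑ i, ∑ j, ∑ α, ∑ β, g i β α j := by
  conv_lhs => enter [2, i, 2, j]; rw [Finset.sum_comm]
  conv_lhs => enter [2, i]; rw [Finset.sum_comm]
  conv_lhs => enter [2, i, 2, j]; rw [Finset.sum_comm]

lemma stmt3_delta1 {d : ℕ} (c : ℝ) (ξ : Matrix (Fin d) (Fin d) ℝ) :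
    (∑ i, ∑ j, ∑ α, ∑ β,
      (c * (if i = α then (1:ℝ) else 0) * (if j = β then (1:ℝ) else 0)) * ξ i α * ξ j β)
      = c * (∑ i, ξ i i)^2 := by
  have h : ∀ (i j α β : Fin d),
      (c * (if i = α then (1:ℝ) else 0) * (if j = β then (1:ℝ) else 0)) * ξ i α * ξ j β
      = if j = β then (if i = α then c * ξ i α * ξ j β else 0) else 0 := by
    intros; split_ifs <;> ring
  simp only [h, Finset.sum_ite_eq, Finset.mem_univ, if_true]
  rw [sq, Finset.sum_mul_sum, Finset.mul_sum]
  refine Finset.sum_congr rfl fun i _ => ?_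
  rw [Finset.mul_sum]
  exact Finset.sum_congr rfl fun j _ => by ring

lemma stmt3_delta2 {d : ℕ} (c : ℝ) (ξ : Matrix (Fin d) (Fin d) ℝ) :
    (∑ i, ∑ j, ∑ α, ∑ β,
      (c * (if i = β then (1:ℝ) else 0) * (if j = α then (1:ℝ) else 0)) * ξ i α * ξ j β)
      = c * ∑ i, ∑ α, ξ i α * ξ α i := by
  have h : ∀ (i j α β : Fin d),
      (c * (if i = β then (1:ℝ) else 0) * (if j = α then (1:ℝ) else 0)) * ξ i α * ξ j β
      = if i = β then (if j = α then c * ξ i α * ξ j β else 0) else 0 := by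
    intros; split_ifs <;> ring
  simp only [h, Finset.sum_ite_eq, Finset.mem_univ, if_true, Finset.mul_sum]
  exact Finset.sum_congr rfl fun i _ => Finset.sum_congr rfl fun j _ => by ring

lemma stmt3_delta3 {d : ℕ} (c : ℝ) (ξ : Matrix (Fin d) (Fin d) ℝ) :
    (∑ i, ∑ j, ∑ α, ∑ β,
      (c * (if i = j then (1:ℝ) else 0) * (if α = β then (1:ℝ) else 0)) * ξ i α * ξ j β)
      = c * ∑ i, ∑ α, ξ i α ^ 2 := by
  have h : ∀ (i j α β : Fin d),
      (c * (if i = j then (1:ℝ) else 0) * (if α = β then (1:ℝ) else 0)) * ξ i α * ξ j β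
      = if α = β then (if i = j then c * ξ i α * ξ j β else 0) else 0 := by
    intros; split_ifs <;> ring
  conv_lhs => enter [2, i]; rw [Finset.sum_comm]
  simp only [h, Finset.sum_ite_eq, Finset.mem_univ, if_true, Finset.mul_sum]
  exact Finset.sum_congr rfl fun i _ => Finset.sum_congr rfl fun j _ => by ring

/-- With `b = a + μδ_{iα}δ_{jβ} − μδ_{iβ}δ_{jα} − μδ_{ij}δ_{αβ}`, `μ = κ₁/4`,
one has `b ξ ξ ≥ (κ₁/8)|ξ + ξᵀ|²` for every matrix `ξ`; in particular the quadratic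
form of `b` is positive semidefinite and vanishes on skew-symmetric matrices. -/
theorem stmt3 (d : ℕ) (κ₁ : ℝ) (hκ : 0 < κ₁)
    (a : Fin d → Fin d → Fin d → Fin d → ℝ)
    (hsym1 : ∀ i j α β, a i j α β = a j i β α)
    (hsym2 : ∀ i j α β, a i j α β = a α j i β)
    (hcoer : ∀ ξ : Matrix (Fin d) (Fin d) ℝ, ξ.IsSymm →
      κ₁ * ∑ i, ∑ α, (ξ i α) ^ 2 ≤ ∑ i, ∑ j, ∑ α, ∑ β, a i j α β * ξ i α * ξ j β)
    (b : Fin d → Fin d → Fin d → Fin d → ℝ)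
    (hb : ∀ i j α β, b i j α β = a i j α β
      + (κ₁ / 4) * (if i = α then (1:ℝ) else 0) * (if j = β then (1:ℝ) else 0)
      - (κ₁ / 4) * (if i = β then (1:ℝ) else 0) * (if j = α then (1:ℝ) else 0)
      - (κ₁ / 4) * (if i = j then (1:ℝ) else 0) * (if α = β then (1:ℝ) else 0)) :
    (∀ ξ : Matrix (Fin d) (Fin d) ℝ,
      (κ₁ / 8) * ∑ i, ∑ α, ((ξ + ξᵀ) i α) ^ 2 ≤
        ∑ i, ∑ j, ∑ α, ∑ β, b i j α β * ξ i α * ξ j β) ∧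
    (∀ ξ : Matrix (Fin d) (Fin d) ℝ,
      0 ≤ ∑ i, ∑ j, ∑ α, ∑ β, b i j α β * ξ i α * ξ j β) ∧
    (∀ ξ : Matrix (Fin d) (Fin d) ℝ, ξᵀ = -ξ →
      ∑ i, ∑ j, ∑ α, ∑ β, b i j α β * ξ i α * ξ j β = 0) := by
  -- derived symmetry in the (2,4) slots
  have hsym24 : ∀ i j α β, a i j α β = a i β α j := by
    intro i j α β
    rw [hsym1 i j α β, hsym2 j i β α, hsym1 β i j α]
  -- the quadratic form of `a` at `ξ + ξᵀ` equals 4 times its value at `ξ`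
  have key : ∀ ξ : Matrix (Fin d) (Fin d) ℝ,
      (∑ i, ∑ j, ∑ α, ∑ β, a i j α β * (ξ i α + ξ α i) * (ξ j β + ξ β j))
        = 4 * ∑ i, ∑ j, ∑ α, ∑ β, a i j α β * ξ i α * ξ j β := by
    intro ξ
    have h2 : (∑ i, ∑ j, ∑ α, ∑ β, a i j α β * ξ α i * ξ j β)
        = ∑ i, ∑ j, ∑ α, ∑ β, a i j α β * ξ i α * ξ j β := by
      rw [stmt3_swap13 (fun i j α β => a i j α β * ξ α i * ξ j β)]
      exact stmt3_sum4_congr fun i j α β => by rw [← hsym2 i j α β]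
    have h3 : (∑ i, ∑ j, ∑ α, ∑ β, a i j α β * ξ i α * ξ β j)
        = ∑ i, ∑ j, ∑ α, ∑ β, a i j α β * ξ i α * ξ j β := by
      rw [stmt3_swap24 (fun i j α β => a i j α β * ξ i α * ξ β j)]
      exact stmt3_sum4_congr fun i j α β => by rw [← hsym24 i j α β]
    have h4 : (∑ i, ∑ j, ∑ α, ∑ β, a i j α β * ξ α i * ξ β j)
        = ∑ i, ∑ j, ∑ α, ∑ β, a i j α β * ξ i α * ξ j β := by
      rw [stmt3_swap13 (fun i j α β => a i j α β * ξ α i * ξ β j)]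
      rw [stmt3_swap24 (fun i j α β => a α j i β * ξ i α * ξ β j)]
      refine stmt3_sum4_congr fun i j α β => ?_
      rw [show a i j α β = a α β i j from by rw [hsym2 i j α β, hsym24 α j i β]]
    calc (∑ i, ∑ j, ∑ α, ∑ β, a i j α β * (ξ i α + ξ α i) * (ξ j β + ξ β j))
        = ∑ i, ∑ j, ∑ α, ∑ β, (a i j α β * ξ i α * ξ j β + (a i j α β * ξ α i * ξ j β
            + (a i j α β * ξ i α * ξ β j + a i j α β * ξ α i * ξ β j))) :=
          stmt3_sum4_congr fun i j α β => by ring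
      _ = (∑ i, ∑ j, ∑ α, ∑ β, a i j α β * ξ i α * ξ j β)
          + ((∑ i, ∑ j, ∑ α, ∑ β, a i j α β * ξ α i * ξ j β)
          + ((∑ i, ∑ j, ∑ α, ∑ β, a i j α β * ξ i α * ξ β j)
          + (∑ i, ∑ j, ∑ α, ∑ β, a i j α β * ξ α i * ξ β j))) := by
          simp only [Finset.sum_add_distrib]
      _ = 4 * ∑ i, ∑ j, ∑ α, ∑ β, a i j α β * ξ i α * ξ j β := by
          rw [h2, h3, h4]; ring
  -- the quadratic form of `b` in terms of that of `a`
  have hQb : ∀ ξ : Matrix (Fin d) (Fin d) ℝ,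
      (∑ i, ∑ j, ∑ α, ∑ β, b i j α β * ξ i α * ξ j β)
        = (∑ i, ∑ j, ∑ α, ∑ β, a i j α β * ξ i α * ξ j β)
          + (κ₁ / 4) * (∑ i, ξ i i)^2
          - (κ₁ / 4) * (∑ i, ∑ α, ξ i α * ξ α i)
          - (κ₁ / 4) * (∑ i, ∑ α, ξ i α ^ 2) := by
    intro ξ
    calc (∑ i, ∑ j, ∑ α, ∑ β, b i j α β * ξ i α * ξ j β)
        = ∑ i, ∑ j, ∑ α, ∑ β, (a i j α β * ξ i α * ξ j β
          + ((κ₁ / 4) * (if i = α then (1:ℝ) else 0) * (if j = β then (1:ℝ) else 0)) * ξ i α * ξ j β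
          - ((κ₁ / 4) * (if i = β then (1:ℝ) else 0) * (if j = α then (1:ℝ) else 0)) * ξ i α * ξ j β
          - ((κ₁ / 4) * (if i = j then (1:ℝ) else 0) * (if α = β then (1:ℝ) else 0)) * ξ i α * ξ j β) :=
          stmt3_sum4_congr fun i j α β => by rw [hb i j α β]; ring
      _ = (∑ i, ∑ j, ∑ α, ∑ β, a i j α β * ξ i α * ξ j β)
          + (∑ i, ∑ j, ∑ α, ∑ β, ((κ₁ / 4) * (if i = α then (1:ℝ) else 0) * (if j = β then (1:ℝ) else 0)) * ξ i α * ξ j β)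
          - (∑ i, ∑ j, ∑ α, ∑ β, ((κ₁ / 4) * (if i = β then (1:ℝ) else 0) * (if j = α then (1:ℝ) else 0)) * ξ i α * ξ j β)
          - (∑ i, ∑ j, ∑ α, ∑ β, ((κ₁ / 4) * (if i = j then (1:ℝ) else 0) * (if α = β then (1:ℝ) else 0)) * ξ i α * ξ j β) := by
          simp only [Finset.sum_add_distrib, Finset.sum_sub_distrib]
      _ = _ := by rw [stmt3_delta1 (κ₁/4) ξ, stmt3_delta2 (κ₁/4) ξ, stmt3_delta3 (κ₁/4) ξ]
  -- expansion of the symmetrized square norm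
  have quadE : ∀ ξ : Matrix (Fin d) (Fin d) ℝ,
      (∑ i, ∑ α, (ξ i α + ξ α i)^2)
        = 2 * (∑ i, ∑ α, ξ i α * ξ α i) + 2 * (∑ i, ∑ α, ξ i α ^ 2) := by
    intro ξ
    have h1 : (∑ i, ∑ α, ξ α i ^ 2) = ∑ i, ∑ α, ξ i α ^ 2 := Finset.sum_comm
    have h2 : (∑ i, ∑ α, ξ α i * ξ i α) = ∑ i, ∑ α, ξ i α * ξ α i := Finset.sum_comm
    calc (∑ i, ∑ α, (ξ i α + ξ α i)^2)
        = ∑ i, ∑ α, (ξ i α ^ 2 + (ξ α i ^ 2 + (ξ i α * ξ α i + ξ α i * ξ i α))) := by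
          refine Finset.sum_congr rfl fun i _ => Finset.sum_congr rfl fun α _ => by ring
      _ = (∑ i, ∑ α, ξ i α ^ 2) + ((∑ i, ∑ α, ξ α i ^ 2)
          + ((∑ i, ∑ α, ξ i α * ξ α i) + (∑ i, ∑ α, ξ α i * ξ i α))) := by
          simp only [Finset.sum_add_distrib]
      _ = _ := by rw [h1, h2]; ring
  have happ : ∀ (ξ : Matrix (Fin d) (Fin d) ℝ) (i α : Fin d),
      (ξ + ξᵀ) i α = ξ i α + ξ α i := by
    intro ξ i α; simp [Matrix.add_apply, Matrix.transpose_apply]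
  -- the master inequality
  have master : ∀ ξ : Matrix (Fin d) (Fin d) ℝ,
      (κ₁ / 8) * ∑ i, ∑ α, ((ξ + ξᵀ) i α) ^ 2 ≤
        ∑ i, ∑ j, ∑ α, ∑ β, b i j α β * ξ i α * ξ j β := by
    intro ξ
    have hE : (∑ i, ∑ α, ((ξ + ξᵀ) i α) ^ 2) = ∑ i, ∑ α, (ξ i α + ξ α i)^2 := by
      refine Finset.sum_congr rfl fun i _ => Finset.sum_congr rfl fun α _ => by rw [happ]
    have hco := hcoer (ξ + ξᵀ) (Matrix.isSymm_add_transpose_self ξ)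
    have hcoQ : (∑ i, ∑ j, ∑ α, ∑ β, a i j α β * (ξ + ξᵀ) i α * (ξ + ξᵀ) j β)
        = 4 * ∑ i, ∑ j, ∑ α, ∑ β, a i j α β * ξ i α * ξ j β := by
      rw [stmt3_sum4_congr fun i j α β => by rw [happ ξ i α, happ ξ j β]]
      exact key ξ
    rw [hcoQ] at hco
    rw [hE] at hco ⊢
    rw [hQb ξ]
    have hq := quadE ξ
    have hT : 0 ≤ (κ₁ / 4) * (∑ i, ξ i i)^2 := by positivity
    have h1 : (κ₁ / 4) * (∑ i, ∑ α, ξ i α * ξ α i) + (κ₁ / 4) * (∑ i, ∑ α, ξ i α ^ 2)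
        = (κ₁ / 8) * ∑ i, ∑ α, (ξ i α + ξ α i)^2 := by
      rw [hq]; ring
    linarith
  refine ⟨master, fun ξ => le_trans (by positivity) (master ξ), ?_⟩
  -- vanishing on skew-symmetric matrices
  intro ξ hξ
  have hζ : ξ + ξᵀ = 0 := by rw [hξ]; abel
  have hadd : ∀ i α, ξ i α + ξ α i = 0 := by
    intro i α
    have := congrFun (congrFun hζ i) α
    simpa [Matrix.add_apply, Matrix.transpose_apply] using this
  have hQ0 : (∑ i, ∑ j, ∑ α, ∑ β, a i j α β * ξ i α * ξ j β) = 0 := by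
    have hk := key ξ
    rw [stmt3_sum4_congr (g := fun _ _ _ _ => (0:ℝ))
      (fun i j α β => by rw [hadd i α]; ring)] at hk
    simp only [Finset.sum_const_zero] at hk
    linarith
  have hT0 : (∑ i, ξ i i) = 0 := by
    refine Finset.sum_eq_zero fun i _ => ?_
    have := hadd i i; linarith
  have hE0 : (∑ i, ∑ α, (ξ i α + ξ α i)^2) = 0 :=
    Finset.sum_eq_zero fun i _ => Finset.sum_eq_zero fun α _ => by rw [hadd]; ring
  have hq := quadE ξ
  rw [hQb ξ, hQ0, hT0]
  have hCN : (∑ i, ∑ α, ξ i α * ξ α i) + (∑ i, ∑ α, ξ i α ^ 2) = 0 := by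
    rw [hE0] at hq; linarith
  linear_combination (-(κ₁ / 4)) * hCN
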